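/- arXiv:1909.08687 — 10 statements merged into one kernel-verified Lean document; each statement's English description precedes it below -/
import Mathlib

section
/- If a binary operation + on a nonempty set G satisfies the Hilbert property H (for all a, b in G the equations x + a = b and a + y = b each have a unique solution) and the cyclic associativity I property (a + (b + c) = c + (a + b) for all a, b, c in G), then there exists a two-sided neutral element e in G with e + a = a + e = a for all a in G, i.e., (G, +) is a loop. -/
/-- A quasigroup satisfying CAI is a loop: it has a two-sided neutral element. -/
theorem stmt_10 {G : Type*} [Nonempty G] (op : G → G → G)
    (hH : ∀ a b : G, (∃! x : G, op x a = b) ∧ (∃! y : G, op a y = b))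
    (hprop : ∀ a b c : G, op a (op b c) = op c (op a b)) :
    ∃ e : G, ∀ a : G, op e a = a ∧ op a e = a := by
  obtain ⟨a⟩ := ‹Nonempty G›
  obtain ⟨e, he, -⟩ := (hH a a).2
  have hleft : ∀ z : G, op e z = z := by
    intro z
    obtain ⟨c, hc, -⟩ := (hH a z).1
    calc op e z = op e (op c a) := by rw [hc]
      _ = op a (op e c) := hprop e c a
      _ = op c (op a e) := hprop a e c
      _ = op c a := by rw [he]
      _ = z := hc
  refine ⟨e, fun x => ⟨hleft x, ?_⟩⟩
  exact (calc x = op e (op e x) := by rw [hleft, hleft]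
    _ = op x (op e e) := hprop e e x
    _ = op x e := by rw [hleft]).symm
end

section
/- If a binary operation + on a nonempty set G satisfies the Hilbert property H (for all a, b in G the equations x + a = b and a + y = b each have a unique solution) and the cyclic associativity II property (a + (b + c) = (c + a) + b for all a, b, c in G), then there exists a two-sided neutral element e in G with e + a = a + e = a for all a in G, i.e., (G, +) is a loop. -/
/-- A quasigroup satisfying CAII is a loop: it has a two-sided neutral element. -/
theorem stmt_11 {G : Type*} [Nonempty G] (op : G → G → G)
    (hH : ∀ a b : G, (∃! x : G, op x a = b) ∧ (∃! y : G, op a y = b))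
    (hprop : ∀ a b c : G, op a (op b c) = op (op c a) b) :
    ∃ e : G, ∀ a : G, op e a = a ∧ op a e = a := by
  obtain ⟨a₀⟩ := ‹Nonempty G›
  choose f hf using fun b : G => ((hH b b).2).exists
  have hleft : ∀ b a : G, op (f b) a = a := by
    intro b a
    have h := hprop a b (f b)
    rw [hf b] at h
    exact (hH b (op a b)).1.unique h.symm rfl
  refine ⟨f a₀, fun a => ⟨hleft a₀ a, ?_⟩⟩
  have : f a = f a₀ := (hH a₀ a₀).1.unique (hleft a a₀) (hleft a₀ a₀)
  rw [← this, hf a]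
end

section
/- If a binary operation + on G satisfies the Hilbert property H (for all a, b in G the equations x + a = b and a + y = b each have a unique solution) and the cyclic associativity II property (a + (b + c) = (c + a) + b for all a, b, c in G), then + is associative: a + (b + c) = (a + b) + c for all a, b, c in G. -/
/-- A quasigroup satisfying CAII is associative. -/
theorem stmt_12 {G : Type*} (op : G → G → G)
    (hH : ∀ a b : G, (∃! x : G, op x a = b) ∧ (∃! y : G, op a y = b))
    (hCAII : ∀ a b c : G, op a (op b c) = op (op c a) b) :
    ∀ a b c : G, op a (op b c) = op (op a b) c := by
  intro a b c
  -- right cancellation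
  have rcancel : ∀ p x y : G, op x p = op y p → x = y := by
    intro p x y h
    obtain ⟨u, _, hu⟩ := (hH p (op y p)).1
    rw [hu x h, hu y rfl]
  -- local right identity for a, which turns out to be a global left identity
  obtain ⟨e, he, -⟩ := (hH a a).2
  have leftid : ∀ x : G, op e x = x := by
    intro x
    apply rcancel a
    have := (hCAII x a e).symm
    rwa [he] at this
  have h1 : ∀ u v : G, op u v = op (op v e) u := by
    intro u v
    have := hCAII e u v
    rwa [leftid] at this
  have h2 : ∀ u v : G, op u v = op (op v u) e := by
    intro u v
    have := hCAII u e v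
    rwa [leftid] at this
  have sigma_id : ∀ x : G, op x e = x := by
    intro x
    have key : op (op e x) e = op (op e e) x := by
      rw [← h2 x e, h1 x e]
    rwa [leftid, leftid, leftid] at key
  have comm : ∀ u v : G, op u v = op v u := by
    intro u v
    have := h2 u v
    rwa [sigma_id] at this
  calc op a (op b c) = op (op c a) b := hCAII a b c
    _ = op b (op c a) := (comm _ _).symm
    _ = op (op a b) c := hCAII b c a
end

section
/- If a binary operation + on G satisfies the Hilbert property H (for all a, b in G the equations x + a = b and a + y = b each have a unique solution) and the cyclic associativity II property (a + (b + c) = (c + a) + b for all a, b, c in G), then + also satisfies cyclic associativity I: a + (b + c) = c + (a + b) for all a, b, c in G. -/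
/-- A quasigroup satisfying CAII also satisfies CAI. -/
theorem stmt_13 {G : Type*} (op : G → G → G)
    (hH : ∀ a b : G, (∃! x : G, op x a = b) ∧ (∃! y : G, op a y = b))
    (hCAII : ∀ a b c : G, op a (op b c) = op (op c a) b) :
    ∀ a b c : G, op a (op b c) = op c (op a b) := by
  have lcancel : ∀ a x y : G, op a x = op a y → x = y := fun a x y h =>
    ((hH a (op a y)).2).unique h rfl
  have rcancel : ∀ a x y : G, op x a = op y a → x = y := fun a x y h =>
    ((hH a (op y a)).1).unique h rfl
  -- (2): ((cd)a)b = ((ab)c)d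
  have h2 : ∀ a b c d : G,
      op (op (op c d) a) b = op (op (op a b) c) d := by
    intro a b c d
    have e1 : op a (op b (op c d)) = op (op (op c d) a) b := hCAII a b (op c d)
    have e2 : op b (op c d) = op (op d b) c := hCAII b c d
    have e3 : op a (op (op d b) c) = op (op c a) (op d b) := hCAII a (op d b) c
    have e4 : op (op c a) (op d b) = op (op b (op c a)) d := hCAII (op c a) d b
    have e5 : op b (op c a) = op (op a b) c := hCAII b c a
    calc op (op (op c d) a) b = op a (op b (op c d)) := e1.symm
      _ = op a (op (op d b) c) := by rw [e2]
      _ = op (op c a) (op d b) := e3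
      _ = op (op b (op c a)) d := e4
      _ = op (op (op a b) c) d := by rw [e5]
  -- (3): (cb)a = (ab)c
  have h3 : ∀ a b c : G, op (op c b) a = op (op a b) c := by
    intro a b c
    exact rcancel b _ _ (h2 a b c b)
  have comm : ∀ b c : G, op b c = op c b := by
    intro b c
    have a : G := b
    apply lcancel a
    calc op a (op b c) = op (op c a) b := hCAII a b c
      _ = op (op b a) c := h3 b a c
      _ = op a (op c b) := (hCAII a c b).symm
  intro a b c
  calc op a (op b c) = op (op c a) b := hCAII a b c
    _ = op (op b a) c := h3 b a c
    _ = op c (op b a) := comm _ _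
    _ = op c (op a b) := by rw [comm b a]
end

section
/- If a binary operation + on a nonempty set G satisfies the Hilbert property H (for all a, b in G the equations x + a = b and a + y = b each have a unique solution) and the Abel-Grassmann II property (a + (b + c) = (b + a) + c for all a, b, c in G), then there exists a two-sided neutral element e in G with e + a = a + e = a for all a in G, i.e., (G, +) is a loop. -/
/-- A quasigroup satisfying AGII is a loop: it has a two-sided neutral element. -/
theorem stmt_14 {G : Type*} [Nonempty G] (op : G → G → G)
    (hH : ∀ a b : G, (∃! x : G, op x a = b) ∧ (∃! y : G, op a y = b))
    (hprop : ∀ a b c : G, op a (op b c) = op (op b a) c) :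
    ∃ e : G, ∀ a : G, op e a = a ∧ op a e = a := by
  obtain ⟨a⟩ := ‹Nonempty G›
  obtain ⟨e, he, -⟩ := (hH a a).1
  refine ⟨e, fun c => ?_⟩
  have hleft : ∀ c : G, op e c = c := by
    intro c
    have h1 : op a (op e c) = op a c := by rw [hprop, he]
    obtain ⟨-, y, -, huniq⟩ := hH a (op a c)
    exact (huniq _ h1).trans (huniq c rfl).symm
  have hright : op c e = c := by
    have h1 : op (op c e) a = op c a := by rw [← hprop, hleft]
    obtain ⟨x, -, huniq⟩ := (hH a (op c a)).1
    exact (huniq _ h1).trans (huniq c rfl).symm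
  exact ⟨hleft c, hright⟩
end

section
/- If a binary operation + on a nonempty set G satisfies the Hilbert property H (for all a, b in G the equations x + a = b and a + y = b each have a unique solution) and the reduced product property ((a + b) + c = a + (c + b) for all a, b, c in G), then there exists a two-sided neutral element e in G with e + a = a + e = a for all a in G, i.e., (G, +) is a loop. -/
/-- A quasigroup satisfying R is a loop: it has a two-sided neutral element. -/
theorem stmt_15 {G : Type*} [Nonempty G] (op : G → G → G)
    (hH : ∀ a b : G, (∃! x : G, op x a = b) ∧ (∃! y : G, op a y = b))
    (hprop : ∀ a b c : G, op (op a b) c = op a (op c b)) :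
    ∃ e : G, ∀ a : G, op e a = a ∧ op a e = a := by
  obtain ⟨a⟩ := ‹Nonempty G›
  obtain ⟨e, he, -⟩ := (hH a a).2
  have cancel : ∀ x y z : G, op x y = op x z → y = z := by
    intro x y z h
    obtain ⟨w, -, hu⟩ := (hH x (op x z)).2
    exact (hu y h).trans (hu z rfl).symm
  have hr : ∀ c : G, op c e = c := by
    intro c
    have h := hprop a e c
    rw [he] at h
    exact (cancel a _ _ h).symm
  refine ⟨e, fun b => ⟨?_, hr b⟩⟩
  have h := hprop a b e
  rw [hr (op a b)] at h
  exact (cancel a _ _ h).symm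
end

section
/- Let G be a nonempty set with a binary operation +. Then (G, +) is an abelian group (+ is associative and commutative, there is a two-sided neutral element e, and every a in G has b with a + b = e) if and only if + satisfies the Hilbert property H (for all a, b in G the equations x + a = b and a + y = b each have a unique solution) and the cyclic associativity I property (a + (b + c) = c + (a + b) for all a, b, c in G). -/
/-- (G, +) is an abelian group iff it satisfies H and CAI. -/
theorem stmt_16 {G : Type*} [Nonempty G] (op : G → G → G) :
    ((∀ a b c : G, op a (op b c) = op (op a b) c) ∧
     (∀ a b : G, op a b = op b a) ∧
     (∃ e : G, (∀ a : G, op e a = a ∧ op a e = a) ∧ (∀ a : G, ∃ b : G, op a b = e)))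
    ↔
    ((∀ a b : G, (∃! x : G, op x a = b) ∧ (∃! y : G, op a y = b)) ∧
     (∀ a b c : G, op a (op b c) = op c (op a b))) := by
  constructor
  · rintro ⟨assoc, comm, e, he, hinv⟩
    refine ⟨fun a b => ?_, fun a b c => by rw [assoc, comm (op a b) c]⟩
    obtain ⟨a', ha'⟩ := hinv a
    constructor
    · refine ⟨op b a', ?_, fun x hx => ?_⟩
      · show op (op b a') a = b
        rw [← assoc, comm a' a, ha', (he b).2]
      · simp only at hx
        rw [← hx, ← assoc, ha', (he x).2]
    · refine ⟨op b a', ?_, fun y hy => ?_⟩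
      · show op a (op b a') = b
        rw [comm a, ← assoc, comm a' a, ha', (he b).2]
      · simp only at hy
        rw [← hy, comm a y, ← assoc, ha', (he y).2]
  · rintro ⟨hH, cai⟩
    -- left cancellation and right solvability from H
    inhabit G
    set a₀ : G := default
    -- identity: e with a₀ + e = a₀
    obtain ⟨e, he, -⟩ := (hH a₀ a₀).2
    -- e is a left identity: for all c, e + c = c
    have hleft : ∀ c : G, op e c = c := by
      intro c
      obtain ⟨b, hb, -⟩ := (hH a₀ c).1
      -- CAI: b + (a₀ + e) = e + (b + a₀)
      have := cai b a₀ e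
      rw [he, hb] at this
      exact this.symm
    -- e is a right identity
    have hright : ∀ c : G, op c e = c := by
      intro c
      have := cai e c e
      rw [hleft c, hleft (op c e)] at this
      -- this : op c e = op e c = c? recheck
      exact this.trans (hleft c)
    -- commutativity
    have comm : ∀ a c : G, op a c = op c a := by
      intro a c
      have := cai a e c
      rw [hleft c, hright a] at this
      exact this
    refine ⟨fun a b c => ?_, comm, e, fun a => ⟨hleft a, hright a⟩, fun a => ?_⟩
    · rw [cai a b c, comm c (op a b)]
    · obtain ⟨b, hb, -⟩ := (hH a e).2
      exact ⟨b, hb⟩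
end

section
/- Let G be a nonempty set with a binary operation +. Then (G, +) is an abelian group (+ is associative and commutative, there is a two-sided neutral element e, and every a in G has b with a + b = e) if and only if + satisfies the Hilbert property H (for all a, b in G the equations x + a = b and a + y = b each have a unique solution) and the cyclic associativity II property (a + (b + c) = (c + a) + b for all a, b, c in G). -/
/-- (G, +) is an abelian group iff it satisfies H and CAII. -/
theorem stmt_17 {G : Type*} [Nonempty G] (op : G → G → G) :
    ((∀ a b c : G, op a (op b c) = op (op a b) c) ∧
     (∀ a b : G, op a b = op b a) ∧
     (∃ e : G, (∀ a : G, op e a = a ∧ op a e = a) ∧ (∀ a : G, ∃ b : G, op a b = e)))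
    ↔
    ((∀ a b : G, (∃! x : G, op x a = b) ∧ (∃! y : G, op a y = b)) ∧
     (∀ a b c : G, op a (op b c) = op (op c a) b)) := by
  constructor
  · rintro ⟨hassoc, hcomm, e, he, hinv⟩
    constructor
    · intro a b
      obtain ⟨i, hi⟩ := hinv a
      constructor
      · refine ⟨op b i, ?_, ?_⟩
        · show op (op b i) a = b
          rw [← hassoc, hcomm i a, hi, (he b).2]
        · intro y hy
          have : op (op y a) i = op b i := by rw [hy]
          rwa [← hassoc, hi, (he y).2] at this
      · refine ⟨op i b, ?_, ?_⟩
        · show op a (op i b) = b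
          rw [hassoc, hi, (he b).1]
        · intro y hy
          have : op i (op a y) = op i b := by rw [hy]
          rwa [hassoc, hcomm i a, hi, (he y).1] at this
    · intro a b c
      rw [hassoc, hcomm (op a b) c, hassoc]
  · rintro ⟨H, cy⟩
    have rcancel : ∀ a x y : G, op x a = op y a → x = y := by
      intro a x y h
      obtain ⟨z, _, hz⟩ := (H a (op y a)).1
      rw [hz x h, hz y rfl]
    have a0 : G := Classical.arbitrary G
    obtain ⟨e, he, _⟩ := (H a0 a0).2
    have lid : ∀ x : G, op e x = x := by
      intro x
      apply rcancel a0
      have h1 : op x (op a0 e) = op (op e x) a0 := cy x a0 e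
      rw [he] at h1
      exact h1.symm
    have rid : ∀ x : G, op x e = x := by
      intro x
      have h1 : op e (op x e) = op (op e e) x := cy e x e
      rw [lid (op x e), lid e, lid x] at h1
      exact h1
    have comm : ∀ a b : G, op a b = op b a := by
      intro a b
      have h1 : op a (op e b) = op (op b a) e := cy a e b
      rw [lid b, rid (op b a)] at h1
      exact h1
    have assoc : ∀ a b c : G, op a (op b c) = op (op a b) c := by
      intro a b c
      rw [cy a b c, comm (op c a) b, cy b c a]
    exact ⟨assoc, comm, e, fun a => ⟨lid a, rid a⟩, fun a => (H a e).2.exists⟩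
end

section
/- Let G be a nonempty set with a binary operation +. Then (G, +) is an abelian group (+ is associative and commutative, there is a two-sided neutral element e, and every a in G has b with a + b = e) if and only if + satisfies the Hilbert property H (for all a, b in G the equations x + a = b and a + y = b each have a unique solution) and the Abel-Grassmann II property (a + (b + c) = (b + a) + c for all a, b, c in G). -/
/-- (G, +) is an abelian group iff it satisfies H and AGII. -/
theorem stmt_18 {G : Type*} [Nonempty G] (op : G → G → G) :
    ((∀ a b c : G, op a (op b c) = op (op a b) c) ∧
     (∀ a b : G, op a b = op b a) ∧
     (∃ e : G, (∀ a : G, op e a = a ∧ op a e = a) ∧ (∀ a : G, ∃ b : G, op a b = e)))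
    ↔
    ((∀ a b : G, (∃! x : G, op x a = b) ∧ (∃! y : G, op a y = b)) ∧
     (∀ a b c : G, op a (op b c) = op (op b a) c)) := by
  constructor
  · rintro ⟨hA, hC, e, he, hi⟩
    constructor
    · intro a b
      obtain ⟨a', ha'⟩ := hi a
      constructor
      · refine ⟨op b a', ?_, ?_⟩
        · show op (op b a') a = b
          rw [← hA, hC a' a, ha', (he b).2]
        · intro x hx
          have : op x (op a a') = op b a' := by rw [hA, hx]
          rwa [ha', (he x).2] at this
      · refine ⟨op a' b, ?_, ?_⟩
        · show op a (op a' b) = b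
          rw [hA, ha', (he b).1]
        · intro y hy
          have : op a' (op a y) = op a' b := by rw [hy]
          rwa [hA, hC a' a, ha', (he y).1] at this
    · intro a b c
      rw [hA, hC a b]
  · rintro ⟨hH, hG⟩
    -- cancellation laws
    have rc : ∀ {x y a : G}, op x a = op y a → x = y := by
      intro x y a h
      obtain ⟨z, -, hz⟩ := (hH a (op y a)).1
      rw [hz x h, hz y rfl]
    have lc : ∀ {a x y : G}, op a x = op a y → x = y := by
      intro a x y h
      obtain ⟨z, -, hz⟩ := (hH a (op a y)).2
      rw [hz x h, hz y rfl]
    -- associativity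
    have hA : ∀ a b c : G, op a (op b c) = op (op a b) c := by
      intro c b a
      obtain ⟨d⟩ : Nonempty G := inferInstance
      apply rc (a := d)
      have h1 : op a (op b (op c d)) = op (op c (op b a)) d := by
        rw [hG a b (op c d), hG (op b a) c d]
      have h2 : op a (op b (op c d)) = op (op (op c b) a) d := by
        rw [hG b c d, hG a (op c b) d]
      rw [← h1, h2]
    -- commutativity
    have hC : ∀ a b : G, op a b = op b a := by
      intro a b
      obtain ⟨c⟩ : Nonempty G := inferInstance
      apply rc (a := c)
      rw [← hA a b c, hG a b c]
    refine ⟨hA, hC, ?_⟩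
    obtain ⟨a0⟩ : Nonempty G := inferInstance
    obtain ⟨e, he, -⟩ := (hH a0 a0).1
    have hle : ∀ b : G, op e b = b := by
      intro b
      obtain ⟨y, hy, -⟩ := (hH a0 b).2
      rw [← hy, hA, he]
    refine ⟨e, fun a => ⟨hle a, by rw [hC, hle]⟩, fun a => ?_⟩
    obtain ⟨y, hy, -⟩ := (hH a e).2
    exact ⟨y, hy⟩
end

section
/- Let G be a nonempty set with a binary operation +. Then (G, +) is an abelian group (+ is associative and commutative, there is a two-sided neutral element e, and every a in G has b with a + b = e) if and only if + satisfies the Hilbert property H (for all a, b in G the equations x + a = b and a + y = b each have a unique solution) and the reduced product property ((a + b) + c = a + (c + b) for all a, b, c in G). -/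
/-- (G, +) is an abelian group iff it satisfies H and R. -/
theorem stmt_19 {G : Type*} [Nonempty G] (op : G → G → G) :
    ((∀ a b c : G, op a (op b c) = op (op a b) c) ∧
     (∀ a b : G, op a b = op b a) ∧
     (∃ e : G, (∀ a : G, op e a = a ∧ op a e = a) ∧ (∀ a : G, ∃ b : G, op a b = e)))
    ↔
    ((∀ a b : G, (∃! x : G, op x a = b) ∧ (∃! y : G, op a y = b)) ∧
     (∀ a b c : G, op (op a b) c = op a (op c b))) := by
  constructor
  · rintro ⟨hassoc, hcomm, e, he, hinv⟩
    refine ⟨fun a b => ?_, fun a b c => by rw [← hassoc, hcomm c b]⟩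
    obtain ⟨i, hi⟩ := hinv a
    have hi' : op i a = e := by rw [hcomm]; exact hi
    constructor
    · refine ⟨op b i, ?_, ?_⟩
      · show op (op b i) a = b
        rw [← hassoc, hi', (he b).2]
      · intro y hy
        have : op (op y a) i = op b i := by rw [hy]
        rwa [← hassoc, hi, (he y).2] at this
    · refine ⟨op i b, ?_, ?_⟩
      · show op a (op i b) = b
        rw [hassoc, hi, (he b).1]
      · intro y hy
        have : op i (op a y) = op i b := by rw [hy]
        rwa [hassoc, hi', (he y).1] at this
  · rintro ⟨hH, hR⟩
    -- left cancellation
    have lcancel : ∀ a x y : G, op a x = op a y → x = y := by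
      intro a x y h
      obtain ⟨z, hz, hu⟩ := (hH a (op a y)).2
      rw [hu x h, hu y rfl]
    have hcomm : ∀ b c : G, op b c = op c b := by
      intro b c
      obtain ⟨a⟩ := ‹Nonempty G›
      have h1 : op (op (op a b) c) a = op a (op a (op b c)) := by
        rw [hR (op a b) c a, hR a b (op a c), hR a c b]
      have h2 : op (op (op a b) c) a = op a (op a (op c b)) := by
        rw [hR a b c, hR a (op c b) a]
      have := h1.symm.trans h2
      exact lcancel a _ _ (lcancel a _ _ this)
    have hassoc : ∀ a b c : G, op a (op b c) = op (op a b) c := by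
      intro a b c
      rw [hR a b c, hcomm c b]
    refine ⟨hassoc, hcomm, ?_⟩
    obtain ⟨a⟩ := ‹Nonempty G›
    obtain ⟨e, he, _⟩ := (hH a a).1
    have hle : ∀ b : G, op e b = b := by
      intro b
      obtain ⟨y, hy, _⟩ := (hH a b).2
      rw [← hy, hassoc, he]
    refine ⟨e, fun b => ⟨hle b, by rw [hcomm]; exact hle b⟩, fun b => ?_⟩
    obtain ⟨y, hy, _⟩ := (hH b e).2
    exact ⟨y, hy⟩
end
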